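/- Let X = {a_1, …, a_{d+1}} be a finite set with d+1 elements and let P be the open simplex of strictly positive probability distributions on X, parametrized by the coordinates θ_i := p(a_i), i = 1, …, d (so p(a_{d+1}) = 1 − θ_1 − ⋯ − θ_d). Fix α > 0 and assume the d×d α-information matrix G^{(α)}(θ) in these coordinates is positive definite. Then for every A : X → ℝ and every p = p_θ ∈ P, Var_{p^{(α)}}[(p/p^{(α)})(A − E_p[A])] = (∇_θ E_{p_θ}[A])^T (G^{(α)}(θ))^{-1} (∇_θ E_{p_θ}[A]), where ∇_θ E_{p_θ}[A] is the gradient of the map θ ↦ E_{p_θ}[A]. -/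

import Mathlib

open scoped BigOperators Topology Matrix
open Real MeasureTheory

noncomputable section

/-- Expectation of `A` under the weight/distribution `p` on a finite set. -/
def expct {X : Type*} [Fintype X] (p A : X → ℝ) : ℝ := ∑ x, p x * A x

/-- Covariance of `A` and `B` under `p`. -/
def covf {X : Type*} [Fintype X] (p A B : X → ℝ) : ℝ :=
  (∑ x, p x * A x * B x) - (∑ x, p x * A x) * (∑ x, p x * B x)

/-- Variance of `A` under `p`: `E_p[(A - E_p A)^2]`. -/
def varE {X : Type*} [Fintype X] (p A : X → ℝ) : ℝ :=
  ∑ x, p x * (A x - expct p A) ^ 2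

/-- The α-escort distribution of `p`. -/
def escort {X : Type*} [Fintype X] (α : ℝ) (p : X → ℝ) : X → ℝ :=
  fun x => p x ^ α / ∑ y, p y ^ α

/-- Partial derivative in the `i`-th coordinate direction. -/
def pderiv {m : ℕ} (i : Fin m) (f : (Fin m → ℝ) → ℝ) (θ : Fin m → ℝ) : ℝ :=
  fderiv ℝ f θ (Pi.single i 1)

/-- Covariance matrix of a vector-valued map `A` under `p`. -/
def covMatrix {X : Type*} [Fintype X] {m : ℕ} (p : X → ℝ) (A : X → Fin m → ℝ) :
    Matrix (Fin m) (Fin m) ℝ :=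
  Matrix.of fun i j => covf p (fun x => A x i) (fun x => A x j)

/-- The α-information matrix `G^{(α)}(θ)`. -/
def Galpha {X : Type*} [Fintype X] {m : ℕ} (α : ℝ) (p : (Fin m → ℝ) → X → ℝ)
    (θ : Fin m → ℝ) : Matrix (Fin m) (Fin m) ℝ :=
  Matrix.of fun i j =>
    covf (escort α (p θ)) (fun x => pderiv i (fun t => Real.log (p t x)) θ)
      (fun x => pderiv j (fun t => Real.log (p t x)) θ)

/-- The I_α-divergence (relative α-entropy). -/
def Ialpha {X : Type*} [Fintype X] (α : ℝ) (p q : X → ℝ) : ℝ :=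
  (1 / (1 - α)) * Real.log (∑ x, p x * q x ^ (α - 1))
    + (1 / α) * Real.log (∑ x, q x ^ α)
    - (1 / (α * (1 - α))) * Real.log (∑ x, p x ^ α)

/-- Generalized KL-divergence between positive measures on a finite set. -/
def genKL {X : Type*} [Fintype X] (pt qt : X → ℝ) : ℝ :=
  ∑ x, pt x * Real.log (pt x / qt x) - ∑ x, pt x + ∑ x, qt x

/-- The Fisher information matrix `G^{(e)}(θ)`. -/
def GeMat {X : Type*} [Fintype X] {k : ℕ} (p : (Fin k → ℝ) → X → ℝ) (θ : Fin k → ℝ) :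
    Matrix (Fin k) (Fin k) ℝ :=
  Matrix.of fun i j =>
    ∑ x, p θ x * pderiv i (fun t => Real.log (p t x)) θ * pderiv j (fun t => Real.log (p t x)) θ

/-- The prior matrix `J^λ(θ)` with entries `∂_i log λ · ∂_j log λ`. -/
def Jmat {k : ℕ} (lam : (Fin k → ℝ) → ℝ) (θ : Fin k → ℝ) : Matrix (Fin k) (Fin k) ℝ :=
  Matrix.of fun i j =>
    pderiv i (fun t => Real.log (lam t)) θ * pderiv j (fun t => Real.log (lam t)) θ

/-- The generalized Fisher matrix `G^{(f,F)}(θ)` of the escort model. -/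
def GFF {X : Type*} [Fintype X] {k : ℕ} (F : ℝ → ℝ) (p : (Fin k → ℝ) → X → ℝ)
    (θ : Fin k → ℝ) : Matrix (Fin k) (Fin k) ℝ :=
  Matrix.of fun i j =>
    ∑ x, F (p θ x) * pderiv i (fun t => Real.log (F (p t x))) θ
      * pderiv j (fun t => Real.log (F (p t x))) θ

/-- The generalized f-divergence `D_f^{(F)}(p,q)`. -/
def genDiv {X : Type*} [Fintype X] (f F : ℝ → ℝ) (p q : X → ℝ) : ℝ :=
  (1 / deriv (deriv f) 1) * ∑ x, F (q x) * f (F (p x) / F (q x))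

/-- The Bayesian I_α-divergence between `λ·p` and `μ·q`. -/
def IalphaB {X : Type*} [Fintype X] (α lam mu : ℝ) (p q : X → ℝ) : ℝ :=
  lam * Ialpha α p q + lam * Real.log (lam / mu) - lam + mu

/-- The open-simplex parametrization of distributions on a set with `d+1` points. -/
def simplexFam (d : ℕ) (θ : Fin d → ℝ) : Fin (d + 1) → ℝ :=
  fun x => if h : (x : ℕ) < d then θ ⟨x, h⟩ else 1 - ∑ i, θ i

section Aux

lemma pderiv_eq {m : ℕ} (i : Fin m) {f : (Fin m → ℝ) → ℝ} {θ : Fin m → ℝ}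
    {L : (Fin m → ℝ) →L[ℝ] ℝ} (h : HasFDerivAt f L θ) :
    pderiv i f θ = L (Pi.single i 1) := by rw [pderiv, h.fderiv]

/-- Differential of `t ↦ simplexFam d t x`. -/
def Lx (d : ℕ) (x : Fin (d+1)) : (Fin d → ℝ) →L[ℝ] ℝ :=
  if h : (x : ℕ) < d then ContinuousLinearMap.proj (R := ℝ) (φ := fun _ : Fin d => ℝ) ⟨x, h⟩
  else - ∑ j, ContinuousLinearMap.proj (R := ℝ) (φ := fun _ : Fin d => ℝ) j

lemma hasFDerivAt_simplexFam (d : ℕ) (x : Fin (d+1)) (θ : Fin d → ℝ) :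
    HasFDerivAt (fun t => simplexFam d t x) (Lx d x) θ := by
  unfold simplexFam Lx
  by_cases h : (x : ℕ) < d
  · simp only [dif_pos h]
    exact hasFDerivAt_apply (𝕜 := ℝ) ⟨(x:ℕ), h⟩ θ
  · simp only [dif_neg h]
    have : HasFDerivAt (fun t : Fin d → ℝ => 1 - ∑ i, t i)
        ((0 : (Fin d → ℝ) →L[ℝ] ℝ) - ∑ j, ContinuousLinearMap.proj j) θ := by
      exact (hasFDerivAt_const 1 θ).sub
        (HasFDerivAt.fun_sum fun j _ => (hasFDerivAt_apply (𝕜 := ℝ) j θ))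
    simpa using this

lemma Lx_castSucc (d : ℕ) (j i : Fin d) :
    Lx d (Fin.castSucc j) (Pi.single i 1) = if j = i then 1 else 0 := by
  have h : ((Fin.castSucc j : Fin (d+1)) : ℕ) < d := by simp [j.isLt]
  simp [Lx, dif_pos h, Pi.single_apply]

lemma Lx_last (d : ℕ) (i : Fin d) :
    Lx d (Fin.last d) (Pi.single i 1) = -1 := by
  simp [Lx, Pi.single_apply]

lemma simplexFam_castSucc {d : ℕ} (θ : Fin d → ℝ) (j : Fin d) :
    simplexFam d θ (Fin.castSucc j) = θ j := by
  have h : ((Fin.castSucc j : Fin (d+1)) : ℕ) < d := by simp [j.isLt]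
  simp [simplexFam, dif_pos h]

lemma simplexFam_last {d : ℕ} (θ : Fin d → ℝ) :
    simplexFam d θ (Fin.last d) = 1 - ∑ i, θ i := by
  simp [simplexFam]

lemma pderiv_log_simplexFam {d : ℕ} (i : Fin d) (x : Fin (d+1)) (θ : Fin d → ℝ)
    (hne : simplexFam d θ x ≠ 0) :
    pderiv i (fun t => Real.log (simplexFam d t x)) θ
      = Lx d x (Pi.single i 1) / simplexFam d θ x := by
  have h := (hasFDerivAt_simplexFam d x θ).log hne
  rw [pderiv_eq i h]
  simp [div_eq_inv_mul]

lemma pderiv_expct_simplexFam {d : ℕ} (i : Fin d) (A : Fin (d+1) → ℝ) (θ : Fin d → ℝ) :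
    pderiv i (fun t => expct (simplexFam d t) A) θ
      = A (Fin.castSucc i) - A (Fin.last d) := by
  have h : HasFDerivAt (fun t => expct (simplexFam d t) A)
      (∑ x, A x • Lx d x) θ := by
    have := HasFDerivAt.fun_sum (fun x (_ : x ∈ Finset.univ) =>
      ((hasFDerivAt_simplexFam d x θ).mul_const (A x)))
    simpa [expct, smul_smul, mul_comm] using this
  rw [pderiv_eq i h]
  have : ∀ x : Fin (d+1), (A x • Lx d x) (Pi.single i 1)
      = A x * Lx d x (Pi.single i 1) := by intro x; simp
  simp only [ContinuousLinearMap.sum_apply, this]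
  rw [Fin.sum_univ_castSucc]
  simp only [Lx_castSucc, Lx_last]
  rw [Finset.sum_congr rfl (fun j _ => by rw [mul_ite, mul_one, mul_zero])]
  rw [Finset.sum_ite_eq' Finset.univ i (fun j => A (Fin.castSucc j))]
  simp [mul_comm]
  ring

lemma covf_comm {X : Type*} [Fintype X] (p A B : X → ℝ) : covf p A B = covf p B A := by
  simp only [covf]
  rw [show (∑ x, p x * A x * B x) = ∑ x, p x * B x * A x from
    Finset.sum_congr rfl fun x _ => by ring, mul_comm]

lemma varE_eq_covf {X : Type*} [Fintype X] (p A : X → ℝ) (hp : ∑ x, p x = 1) :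
    varE p A = covf p A A := by
  simp only [varE, covf, expct]
  rw [Finset.sum_congr rfl fun x (_ : x ∈ Finset.univ) => show
    p x * (A x - ∑ y, p y * A y)^2 = p x * A x * A x
      - 2*(∑ y, p y*A y)*(p x * A x) + (∑ y, p y*A y)^2 * p x from by ring]
  rw [Finset.sum_add_distrib, Finset.sum_sub_distrib, ← Finset.mul_sum, ← Finset.mul_sum, hp]
  ring

lemma covf_expand {X : Type*} [Fintype X] {n : ℕ} (p B C : X → ℝ) (hp : ∑ x, p x = 1)
    (c : ℝ) (m : Fin n → ℝ) (s : Fin n → X → ℝ)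
    (h : ∀ x, C x = c + ∑ j, m j * s j x) :
    covf p B C = ∑ j, m j * covf p B (s j) := by
  have h1 : ∑ x, p x * B x * C x
      = (∑ x, p x * B x) * c + ∑ j, m j * ∑ x, p x * B x * s j x := by
    simp only [h, mul_add, Finset.mul_sum, Finset.sum_add_distrib]
    congr 1
    · rw [← Finset.sum_mul]
    · rw [Finset.sum_comm]
      exact Finset.sum_congr rfl fun j _ =>
        Finset.sum_congr rfl fun x _ => by ring
  have h2 : ∑ x, p x * C x = c + ∑ j, m j * ∑ x, p x * s j x := by
    simp only [h, mul_add, Finset.mul_sum, Finset.sum_add_distrib]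
    congr 1
    · rw [← Finset.sum_mul, hp, one_mul]
    · rw [Finset.sum_comm]
      exact Finset.sum_congr rfl fun j _ =>
        Finset.sum_congr rfl fun x _ => by ring
  have h3 : ∑ j, m j * covf p B (s j)
      = (∑ j, m j * (∑ x, p x * B x * s j x))
        - (∑ x, p x * B x) * ∑ j, m j * (∑ x, p x * s j x) := by
    rw [Finset.mul_sum, ← Finset.sum_sub_distrib]
    exact Finset.sum_congr rfl fun j _ => by simp only [covf]; ring
  have hC : covf p B C
      = (∑ x, p x * B x * C x) - (∑ x, p x * B x) * (∑ x, p x * C x) := rfl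
  rw [hC, h1, h2, h3]
  ring

end Aux

theorem variance_eq_norm_differential_simplex {d : ℕ} (α : ℝ) (hα : 0 < α)
    (hG : ∀ θ : Fin d → ℝ, (∀ i, 0 < θ i) → (∑ i, θ i) < 1 →
      (Galpha α (simplexFam d) θ).PosDef) :
    ∀ θ : Fin d → ℝ, (∀ i, 0 < θ i) → (∑ i, θ i) < 1 →
      ∀ A : Fin (d + 1) → ℝ,
        varE (escort α (simplexFam d θ))
            (fun x => (simplexFam d θ x / escort α (simplexFam d θ) x)
              * (A x - expct (simplexFam d θ) A))
          = (fun i => pderiv i (fun t => expct (simplexFam d t) A) θ) ⬝ᵥ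
              ((Galpha α (simplexFam d) θ)⁻¹).mulVec
                (fun i => pderiv i (fun t => expct (simplexFam d t) A) θ) := by
  intro θ hpos hsum A
  classical
  set p : Fin (d+1) → ℝ := simplexFam d θ with hp_def
  have hpcast : ∀ j, p (Fin.castSucc j) = θ j := fun j => simplexFam_castSucc θ j
  have hplast : p (Fin.last d) = 1 - ∑ i, θ i := simplexFam_last θ
  have hppos : ∀ x, 0 < p x := by
    intro x
    induction x using Fin.lastCases with
    | last => rw [hplast]; linarith
    | cast j => rw [hpcast]; exact hpos j
  have hpsum1 : ∑ x, p x = 1 := by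
    rw [Fin.sum_univ_castSucc, hplast, Finset.sum_congr rfl fun j _ => hpcast j]
    ring
  set q : Fin (d+1) → ℝ := escort α p with hq_def
  have hZ : 0 < ∑ y, p y ^ α :=
    Finset.sum_pos (fun y _ => Real.rpow_pos_of_pos (hppos y) α) Finset.univ_nonempty
  have hqpos : ∀ x, 0 < q x := fun x =>
    div_pos (Real.rpow_pos_of_pos (hppos x) α) hZ
  have hqsum1 : ∑ x, q x = 1 := by
    rw [hq_def]
    simp only [escort]
    rw [← Finset.sum_div, div_self hZ.ne']
  set Eb : ℝ := expct p A with hEb_def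
  set f : Fin (d+1) → ℝ := fun x => (p x / q x) * (A x - Eb) with hf_def
  set s : Fin d → Fin (d+1) → ℝ :=
    fun i x => pderiv i (fun t => Real.log (simplexFam d t x)) θ with hs_def
  have hs : ∀ i x, s i x = Lx d x (Pi.single i 1) / p x := fun i x =>
    pderiv_log_simplexFam i x θ (hppos x).ne'
  have hsc : ∀ i j, s i (Fin.castSucc j) = (if j = i then 1 else 0) / θ j := by
    intro i j; rw [hs, Lx_castSucc, hpcast]
  have hsl : ∀ i, s i (Fin.last d) = -1 / p (Fin.last d) := by
    intro i; rw [hs, Lx_last]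
  have hqf : ∀ x, q x * f x = p x * (A x - Eb) := by
    intro x
    rw [hf_def]
    rw [show q x * ((p x / q x) * (A x - Eb)) = (p x / q x * q x) * (A x - Eb) from by ring,
      div_mul_cancel₀ _ (hqpos x).ne']
  set c0 : ℝ := ∑ x, p x * f x with hc0_def
  set m : Fin d → ℝ := fun j => θ j * (f (Fin.castSucc j) - c0) with hm_def
  -- f is affine in the scores s
  have key1 : ∀ x, f x = c0 + ∑ j, m j * s j x := by
    intro x
    induction x using Fin.lastCases with
    | last =>
      have hc0' : c0 = ∑ j, θ j * f (Fin.castSucc j) + p (Fin.last d) * f (Fin.last d) := by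
        rw [hc0_def, Fin.sum_univ_castSucc,
          Finset.sum_congr rfl fun j _ => by rw [hpcast]]
      have hsum' : ∑ j, m j = ∑ j, θ j * f (Fin.castSucc j) - c0 * ∑ j, θ j := by
        simp only [hm_def, mul_sub]
        rw [Finset.sum_sub_distrib, ← Finset.sum_mul, mul_comm]
      have hsm : ∑ j, m j = p (Fin.last d) * c0 - p (Fin.last d) * f (Fin.last d) := by
        rw [hsum', hc0', hplast]; ring
      rw [Finset.sum_congr rfl fun j _ => by rw [hsl],
        show (∑ j, m j * (-1 / p (Fin.last d)))
          = (∑ j, m j) * (-1 / p (Fin.last d)) from by rw [← Finset.sum_mul], hsm]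
      field_simp
      rw [mul_div_right_comm, div_self (hppos _).ne', one_mul]
      ring
    | cast j =>
      rw [Finset.sum_congr rfl fun i _ => by rw [hsc],
        Finset.sum_congr rfl fun i _ => show
          m i * ((if j = i then 1 else 0) / θ j) = if j = i then m i / θ j else 0 from by
            split <;> simp [div_eq_mul_inv],
        Finset.sum_ite_eq Finset.univ j (fun i => m i / θ j)]
      simp only [Finset.mem_univ, if_true]
      simp only [hm_def]
      rw [mul_comm (θ j), mul_div_assoc, div_self (hpos j).ne', mul_one]
      ring
  have hqf0 : ∑ x, q x * f x = 0 := by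
    rw [Finset.sum_congr rfl fun x _ => hqf x]
    simp only [mul_sub]
    rw [Finset.sum_sub_distrib, show (∑ x, p x * Eb) = (∑ x, p x) * Eb from by
      rw [← Finset.sum_mul], hpsum1, one_mul, sub_eq_zero]
    rw [hEb_def]; rfl
  have cov_s_f : ∀ i, covf q (s i) f = A (Fin.castSucc i) - A (Fin.last d) := by
    intro i
    have hcv : covf q (s i) f
        = (∑ x, q x * s i x * f x) - (∑ x, q x * s i x) * (∑ x, q x * f x) := rfl
    rw [hcv, hqf0, mul_zero, sub_zero,
      Finset.sum_congr rfl fun x _ => show q x * s i x * f x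
        = s i x * (p x * (A x - Eb)) from by
          rw [show q x * s i x * f x = s i x * (q x * f x) from by ring, hqf],
      Fin.sum_univ_castSucc]
    have hterm : ∀ j : Fin d, s i (Fin.castSucc j)
        * (p (Fin.castSucc j) * (A (Fin.castSucc j) - Eb))
        = if j = i then A (Fin.castSucc i) - Eb else 0 := by
      intro j
      rw [hsc, hpcast]
      by_cases hji : j = i
      · subst hji
        rw [if_pos rfl, if_pos rfl, div_mul_eq_mul_div, one_mul, mul_comm (θ j),
          mul_div_assoc, div_self (hpos j).ne', mul_one]
      · rw [if_neg hji, if_neg hji]; simp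
    rw [Finset.sum_congr rfl fun j _ => hterm j,
      Finset.sum_ite_eq' Finset.univ i (fun _ => A (Fin.castSucc i) - Eb),
      hsl]
    simp only [Finset.mem_univ, if_true]
    rw [show (-1 / p (Fin.last d)) * (p (Fin.last d) * (A (Fin.last d) - Eb))
      = -((p (Fin.last d) / p (Fin.last d)) * (A (Fin.last d) - Eb)) from by ring,
      div_self (hppos (Fin.last d)).ne']
    ring
  have hGdef : ∀ i j, Galpha α (simplexFam d) θ i j = covf q (s i) (s j) := fun i j => rfl
  set v : Fin d → ℝ := fun i => pderiv i (fun t => expct (simplexFam d t) A) θ with hv_def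
  have hv : ∀ i, v i = A (Fin.castSucc i) - A (Fin.last d) := fun i =>
    pderiv_expct_simplexFam i A θ
  have hGm : (Galpha α (simplexFam d) θ).mulVec m = v := by
    funext i
    rw [Matrix.mulVec, dotProduct]
    rw [Finset.sum_congr rfl fun j _ => show Galpha α (simplexFam d) θ i j * m j
      = m j * covf q (s i) (s j) from by rw [hGdef]; ring]
    rw [← covf_expand q (s i) f hqsum1 c0 m s key1, cov_s_f, hv]
  have hPD := hG θ hpos hsum
  have hdet : IsUnit (Galpha α (simplexFam d) θ).det :=
    isUnit_iff_ne_zero.mpr hPD.det_pos.ne'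
  have hinvv : ((Galpha α (simplexFam d) θ)⁻¹).mulVec v = m := by
    rw [← hGm, Matrix.mulVec_mulVec, Matrix.nonsing_inv_mul _ hdet, Matrix.one_mulVec]
  have hRHS : v ⬝ᵥ ((Galpha α (simplexFam d) θ)⁻¹).mulVec v = ∑ j, m j * v j := by
    rw [hinvv, dotProduct]
    exact Finset.sum_congr rfl fun j _ => by ring
  have hLHS : varE q f = ∑ j, m j * v j := by
    rw [varE_eq_covf q f hqsum1, covf_expand q f f hqsum1 c0 m s key1]
    exact Finset.sum_congr rfl fun j _ => by rw [covf_comm, cov_s_f, hv]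
  rw [hRHS, ← hLHS]
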